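/- For every position i, at most one square begins at position i of the Thue–Morse word: if y and z are nonempty words such that both yy and zz occur in the Thue–Morse word t starting at the same position i, then y = z. -/
import Mathlib


/-- The Thue–Morse word: `t n = s₂(n) mod 2`, where `s₂(n)` is the sum of the
binary digits of `n`. -/
def thueMorse (n : ℕ) : ℕ := (Nat.digits 2 n).sum % 2

/-- The finite word `u` occurs in the infinite word `w` starting at position `i`. -/
def OccursAt (w : ℕ → ℕ) (u : List ℕ) (i : ℕ) : Prop :=
  ∀ j : Fin u.length, u.get j = w (i + j)

lemma tm_lt (n : ℕ) : thueMorse n < 2 := Nat.mod_lt _ (by norm_num)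

lemma tm_two_mul (s : ℕ) : thueMorse (2*s) = thueMorse s := by
  rcases Nat.eq_zero_or_pos s with h | h
  · subst h; rfl
  · unfold thueMorse
    rw [Nat.digits_def' (by norm_num : 1 < 2) (by omega : 0 < 2*s)]
    simp [Nat.mul_div_cancel_left, Nat.mul_mod_right]

lemma tm_odd (s : ℕ) : thueMorse (2*s+1) = 1 - thueMorse s := by
  unfold thueMorse
  rw [Nat.digits_def' (by norm_num : 1 < 2) (by omega : 0 < 2*s+1)]
  have h1 : (2*s+1) % 2 = 1 := by omega
  have h2 : (2*s+1) / 2 = s := by omega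
  rw [h1, h2, List.sum_cons]
  omega

/-- `t u = t v` given equality of the odd positions above them. -/
lemma odd_eq {u v : ℕ} (h : thueMorse (2*u+1) = thueMorse (2*v+1)) :
    thueMorse u = thueMorse v := by
  have hu := tm_odd u; have hv := tm_odd v
  have := tm_lt u; have := tm_lt v; omega

/-- Two equal adjacent letters occur only at odd positions. -/
lemma aa_odd {n : ℕ} (h : thueMorse n = thueMorse (n+1)) : n % 2 = 1 := by
  by_contra hne
  obtain ⟨s, rfl⟩ : ∃ s, n = 2*s := ⟨n/2, by omega⟩
  have h1 := tm_two_mul s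
  have h2 := tm_odd s
  have := tm_lt s
  omega

/-- An overlap of period `r` at position `i`. -/
def Ov (r i : ℕ) : Prop := ∀ n, n ≤ r → thueMorse (i+n) = thueMorse (i+n+r)

/-- The Thue–Morse word is overlap-free. -/
lemma no_overlap : ∀ r, 1 ≤ r → ∀ i, ¬ Ov r i := by
  intro r
  induction r using Nat.strong_induction_on with
  | _ r IH =>
    intro hr i hOv
    rcases Nat.even_or_odd r with ⟨m, hm⟩ | ⟨m, hm⟩
    · -- r = 2m even: descend
      have hm1 : 1 ≤ m := by omega
      rcases Nat.even_or_odd i with ⟨s, hs⟩ | ⟨s, hs⟩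
      · refine IH m (by omega) hm1 s (fun n hn => ?_)
        have h := hOv (2*n) (by omega)
        rw [show i + 2*n = 2*(s+n) from by omega,
            show 2*(s+n) + r = 2*(s+n+m) from by omega] at h
        rw [tm_two_mul, tm_two_mul] at h
        exact h
      · refine IH m (by omega) hm1 s (fun n hn => ?_)
        have h := hOv (2*n) (by omega)
        rw [show i + 2*n = 2*(s+n)+1 from by omega,
            show 2*(s+n)+1 + r = 2*(s+n+m)+1 from by omega] at h
        exact odd_eq h
    · -- r odd
      rcases Nat.lt_or_ge r 5 with h5 | h5
      · rcases Nat.lt_or_ge r 3 with h3 | h3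
        · -- r = 1
          have hr1 : r = 1 := by omega
          subst hr1
          have e0 := hOv 0 (by omega)
          have e1 := hOv 1 (by omega)
          simp only [Nat.add_zero] at e0
          have o1 := aa_odd e0
          have o2 := aa_odd (show thueMorse (i+1) = thueMorse (i+1+1) from e1)
          omega
        · -- r = 3
          have hr3 : r = 3 := by omega
          subst hr3
          by_cases hex : ∃ d, d ≤ 2 ∧ thueMorse (i+d) = thueMorse (i+d+1)
          · obtain ⟨d, hd, he⟩ := hex
            have e1 := hOv d (by omega)
            have e2 := hOv (d+1) (by omega)
            have he' : thueMorse (i+d+3) = thueMorse (i+d+3+1) := by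
              rw [← e1, show i+(d+1)+3 = i+d+3+1 from by omega] at *
              rw [he]; rw [show i+d+1 = i+(d+1) from by omega]; exact e2
            have o1 := aa_odd he
            have o2 := aa_odd he'
            omega
          · push_neg at hex
            have a0 := hex 0 (by omega)
            have a1 := hex 1 (by omega)
            have a2 := hex 2 (by omega)
            have e0 := hOv 0 (by omega)
            simp only [Nat.add_zero] at e0
            rw [show i+0 = i from rfl] at a0
            rw [show i+1+1 = i+2 from rfl] at a1
            rw [show i+2+1 = i+3 from rfl] at a2
            have := tm_lt i; have := tm_lt (i+1); have := tm_lt (i+2)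
            have := tm_lt (i+3)
            omega
      · -- r odd ≥ 5
        by_cases hex : ∃ d, d ≤ r - 1 ∧ thueMorse (i+d) = thueMorse (i+d+1)
        · obtain ⟨d, hd, he⟩ := hex
          have e1 := hOv d (by omega)
          have e2 := hOv (d+1) (by omega)
          have he' : thueMorse (i+d+r) = thueMorse (i+d+r+1) := by
            rw [← e1, he, show i+(d+1)+r = i+d+r+1 from by omega] at *
            rw [show i+d+1 = i+(d+1) from by omega]; exact e2
          have o1 := aa_odd he
          have o2 := aa_odd he'
          omega
        · push_neg at hex
          refine IH 2 (by omega) (by omega) i (fun n hn => ?_)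
          have a0 := hex n (by omega)
          have a1 := hex (n+1) (by omega)
          rw [show i+(n+1)+1 = i+n+2 from by omega,
              show i+(n+1) = i+n+1 from by omega] at a1
          have := tm_lt (i+n); have := tm_lt (i+n+1); have := tm_lt (i+n+2)
          omega

/-- A square of period `p` at position `i`. -/
def Sq (p i : ℕ) : Prop := ∀ n, n < p → thueMorse (i+n) = thueMorse (i+n+p)

/-- A square of even period occurs at an even position. -/
lemma sq_even_even {m i : ℕ} (hm : 1 ≤ m) (h : Sq (2*m) i) : i % 2 = 0 := by
  by_contra hne
  obtain ⟨s, rfl⟩ : ∃ s, i = 2*s+1 := ⟨i/2, by omega⟩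
  refine no_overlap m hm s (fun n hn => ?_)
  rcases Nat.lt_or_ge n m with hlt | hge
  · have h1 := h (2*n) (by omega)
    rw [show 2*s+1 + 2*n = 2*(s+n)+1 from by omega,
        show 2*(s+n)+1 + 2*m = 2*(s+n+m)+1 from by omega] at h1
    exact odd_eq h1
  · have hnm : n = m := by omega
    rw [hnm]
    have h1 := h (2*m-1) (by omega)
    rw [show 2*s+1 + (2*m-1) = 2*(s+m) from by omega,
        show 2*(s+m) + 2*m = 2*(s+m+m) from by omega] at h1
    rw [tm_two_mul, tm_two_mul] at h1
    exact h1
lemma sq_descend {m s : ℕ} (h : Sq (2*m) (2*s)) : Sq m s := by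
  intro n hn
  have h1 := h (2*n) (by omega)
  rw [show 2*s + 2*n = 2*(s+n) from by omega,
      show 2*(s+n) + 2*m = 2*(s+n+m) from by omega] at h1
  rw [tm_two_mul, tm_two_mul] at h1
  exact h1

/-- Squares of odd period have period 1 or 3. -/
lemma sq_odd_small {p i : ℕ} (hodd : p % 2 = 1) (h : Sq p i) : p = 1 ∨ p = 3 := by
  by_contra hne
  have h5 : 5 ≤ p := by omega
  by_cases hex : ∃ d, d ≤ p - 2 ∧ thueMorse (i+d) = thueMorse (i+d+1)
  · obtain ⟨d, hd, he⟩ := hex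
    have e1 := h d (by omega)
    have e2 := h (d+1) (by omega)
    have he' : thueMorse (i+d+p) = thueMorse (i+d+p+1) := by
      rw [← e1, he, show i+(d+1)+p = i+d+p+1 from by omega] at *
      rw [show i+d+1 = i+(d+1) from by omega]; exact e2
    have o1 := aa_odd he
    have o2 := aa_odd he'
    omega
  · push_neg at hex
    refine no_overlap 2 (by omega) i (fun n hn => ?_)
    have a0 := hex n (by omega)
    have a1 := hex (n+1) (by omega)
    rw [show i+(n+1)+1 = i+n+2 from by omega,
        show i+(n+1) = i+n+1 from by omega] at a1
    have := tm_lt (i+n); have := tm_lt (i+n+1); have := tm_lt (i+n+2)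
    omega

lemma sq1_odd {i : ℕ} (h : Sq 1 i) : i % 2 = 1 := by
  have h0 := h 0 (by omega)
  simp only [Nat.add_zero] at h0
  exact aa_odd h0

lemma sq3_ne {i : ℕ} (h : Sq 3 i) : thueMorse i ≠ thueMorse (i+1) := by
  intro he
  have e0 := h 0 (by omega)
  have e1 := h 1 (by omega)
  simp only [Nat.add_zero] at e0
  have he' : thueMorse (i+3) = thueMorse (i+3+1) := by
    rw [← e0, he, show i+1+3 = i+3+1 from by omega] at *
    exact e1
  have o1 := aa_odd he
  have o2 := aa_odd he'
  omega

lemma sq3_odd {i : ℕ} (h : Sq 3 i) : i % 2 = 1 := by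
  have h01 := sq3_ne h
  by_cases h12 : thueMorse (i+1) = thueMorse (i+2)
  · exfalso
    have e1 := h 1 (by omega)
    have e2 := h 2 (by omega)
    have he' : thueMorse (i+1+3) = thueMorse (i+1+3+1) := by
      rw [← e1, h12, show i+2+3 = i+1+3+1 from by omega] at *
      exact e2
    have o1 := aa_odd h12
    have o2 := aa_odd he'
    omega
  · have e0 := h 0 (by omega)
    simp only [Nat.add_zero] at e0
    have := tm_lt i; have := tm_lt (i+1); have := tm_lt (i+2)
    have h02 : thueMorse i = thueMorse (i+2) := by omega
    have h23 : thueMorse (i+2) = thueMorse (i+2+1) := by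
      rw [show i+2+1 = i+3 from by omega, ← h02]; exact e0
    have := aa_odd h23
    omega

/-- Two squares with distinct periods cannot start at the same position. -/
lemma sq_unique : ∀ q p i, 1 ≤ p → p < q → Sq p i → Sq q i → False := by
  intro q
  induction q using Nat.strong_induction_on with
  | _ q IH =>
    intro p i hp hpq hsp hsq
    rcases Nat.even_or_odd p with ⟨m, hm⟩ | ⟨m, hm⟩
    · -- p even
      have hm2 : p = 2*m := by omega
      rw [hm2] at hsp
      have hm1 : 1 ≤ m := by omega
      have hieven : i % 2 = 0 := sq_even_even hm1 hsp
      rcases Nat.even_or_odd q with ⟨m', hm'⟩ | ⟨m', hm'⟩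
      · -- q even too : descend
        have hm2' : q = 2*m' := by omega
        rw [hm2'] at hsq
        obtain ⟨s, rfl⟩ : ∃ s, i = 2*s := ⟨i/2, by omega⟩
        refine IH m' (by omega) m s (by omega) (by omega) ?_ ?_
        · exact sq_descend hsp
        · exact sq_descend hsq
      · -- q odd: q = 1 or 3, q > p ≥ 2 so q = 3
        have hq3 : q = 3 := by
          rcases sq_odd_small (by omega) hsq with h1 | h3 <;> omega
        subst hq3
        have := sq3_odd hsq
        omega
    · -- p odd: p = 1 or 3, i odd
      have hp13 := sq_odd_small (by omega) hsp
      have hiodd : i % 2 = 1 := by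
        rcases hp13 with h1 | h3
        · subst h1; exact sq1_odd hsp
        · subst h3; exact sq3_odd hsp
      rcases Nat.even_or_odd q with ⟨m', hm'⟩ | ⟨m', hm'⟩
      · have hm2' : q = 2*m' := by omega
        rw [hm2'] at hsq
        have : i % 2 = 0 := sq_even_even (by omega) hsq
        omega
      · -- q odd too: q = 3, p = 1
        have hq3 : q = 3 := by
          rcases sq_odd_small (by omega) hsq with h1 | h3 <;> omega
        subst hq3
        have hp1 : p = 1 := by omega
        subst hp1
        have h0 := hsp 0 (by omega)
        simp only [Nat.add_zero] at h0
        exact sq3_ne hsq h0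

lemma occurs_get {u : List ℕ} {i : ℕ} (h : OccursAt thueMorse (u ++ u) i)
    (n : ℕ) (hn : n < u.length) : u[n] = thueMorse (i + n) := by
  have hl : n < (u ++ u).length := by simp; omega
  have := h ⟨n, hl⟩
  simp only [List.get_eq_getElem] at this
  rwa [List.getElem_append_left hn] at this

lemma occurs_get' {u : List ℕ} {i : ℕ} (h : OccursAt thueMorse (u ++ u) i)
    (n : ℕ) (hn : n < u.length) : u[n] = thueMorse (i + n + u.length) := by
  have hl : n + u.length < (u ++ u).length := by simp; omega
  have := h ⟨n + u.length, hl⟩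
  simp only [List.get_eq_getElem] at this
  rw [List.getElem_append_right (by omega : u.length ≤ n + u.length)] at this
  simp only [Nat.add_sub_cancel] at this
  rw [this]
  congr 1
  omega

lemma occurs_sq {u : List ℕ} {i : ℕ} (h : OccursAt thueMorse (u ++ u) i) :
    Sq u.length i := by
  intro n hn
  rw [← occurs_get h n hn, occurs_get' h n hn]


/-- At most one square begins at any given position of the Thue–Morse word:
if `yy` and `zz` are squares occurring in `t` at the same position `i`, then `y = z`. -/
theorem thueMorse_at_most_one_square_per_position
    (y z : List ℕ) (hy : y ≠ []) (hz : z ≠ []) (i : ℕ)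
    (h1 : OccursAt thueMorse (y ++ y) i) (h2 : OccursAt thueMorse (z ++ z) i) :
    y = z := by
  have hyl : 1 ≤ y.length := List.length_pos_iff.mpr hy
  have hzl : 1 ≤ z.length := List.length_pos_iff.mpr hz
  have hs1 := occurs_sq h1
  have hs2 := occurs_sq h2
  have hlen : y.length = z.length := by
    rcases lt_trichotomy y.length z.length with h | h | h
    · exact absurd (sq_unique z.length y.length i hyl h hs1 hs2) (by simp)
    · exact h
    · exact absurd (sq_unique y.length z.length i hzl h hs2 hs1) (by simp)
  apply List.ext_getElem hlen
  intro n hn1 hn2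
  rw [occurs_get h1 n hn1, occurs_get h2 n hn2]
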